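/- The Strang-split Lindblad integrator is completely positive and trace-preserving step by step: Fix γ > 0, Δt > 0 and u ∈ ℝ. For every 2×2 complex matrix ρ: (i) trace(F⁽²⁾(ρ, u)) = trace(ρ); (ii) if ρ is Hermitian then F⁽²⁾(ρ, u) is Hermitian; (iii) if ρ is positive semidefinite then F⁽²⁾(ρ, u) is positive semidefinite. -/

import Mathlib

open Matrix
open scoped ComplexOrder
noncomputable section

/-- Pauli matrix σx. -/
def σx : Matrix (Fin 2) (Fin 2) ℂ := !![0, 1; 1, 0]

/-- The control Hamiltonian H(u) = (u/2) σx. -/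
def Hctrl (u : ℝ) : Matrix (Fin 2) (Fin 2) ℂ := ((u : ℂ) / 2) • σx

/-- Decay probability p(τ) = 1 − e^{−γτ}. -/
def pAD (γ τ : ℝ) : ℝ := 1 - Real.exp (-(γ * τ))

/-- Kraus operator E₀(τ). -/
def E₀ (γ τ : ℝ) : Matrix (Fin 2) (Fin 2) ℂ :=
  !![1, 0; 0, (Real.sqrt (1 - pAD γ τ) : ℂ)]

/-- Kraus operator E₁(τ). -/
def E₁ (γ τ : ℝ) : Matrix (Fin 2) (Fin 2) ℂ :=
  !![0, (Real.sqrt (pAD γ τ) : ℂ); 0, 0]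

/-- The amplitude-damping channel Φ^τ. -/
def ΦAD (γ τ : ℝ) (ρ : Matrix (Fin 2) (Fin 2) ℂ) : Matrix (Fin 2) (Fin 2) ℂ :=
  E₀ γ τ * ρ * (E₀ γ τ)ᴴ + E₁ γ τ * ρ * (E₁ γ τ)ᴴ

/-- The unitary propagator U = exp(−i Δt H(u)). -/
def Uprop (Δt u : ℝ) : Matrix (Fin 2) (Fin 2) ℂ :=
  NormedSpace.exp ((-Complex.I * (Δt : ℂ)) • Hctrl u)

/-- The Strang-split Lindblad integrator F⁽²⁾(ρ, u). -/
def Fstrang (γ Δt : ℝ) (ρ : Matrix (Fin 2) (Fin 2) ℂ) (u : ℝ) : Matrix (Fin 2) (Fin 2) ℂ :=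
  ΦAD γ (Δt / 2) (Uprop Δt u * ΦAD γ (Δt / 2) ρ * (Uprop Δt u)ᴴ)

lemma kraus_sum (γ τ : ℝ) (hγ : 0 ≤ γ) (hτ : 0 ≤ τ) :
    (E₀ γ τ)ᴴ * E₀ γ τ + (E₁ γ τ)ᴴ * E₁ γ τ = 1 := by
  have h1 : (0:ℝ) ≤ 1 - pAD γ τ := by
    simp [pAD]
    positivity
  have h2 : (0:ℝ) ≤ pAD γ τ := by
    simp [pAD]
    have : Real.exp (-(γ * τ)) ≤ Real.exp 0 := Real.exp_le_exp.mpr (by nlinarith)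
    simpa using this
  have s1 : (Real.sqrt (1 - pAD γ τ)) * (Real.sqrt (1 - pAD γ τ)) = 1 - pAD γ τ :=
    Real.mul_self_sqrt h1
  have s2 : (Real.sqrt (pAD γ τ)) * (Real.sqrt (pAD γ τ)) = pAD γ τ :=
    Real.mul_self_sqrt h2
  ext i j
  fin_cases i <;> fin_cases j <;>
    simp [E₀, E₁, Matrix.mul_apply, Fin.sum_univ_succ, Matrix.one_apply,
      ← Complex.ofReal_mul, s1, s2]

lemma phi_trace (γ τ : ℝ) (hγ : 0 ≤ γ) (hτ : 0 ≤ τ) (ρ : Matrix (Fin 2) (Fin 2) ℂ) :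
    (ΦAD γ τ ρ).trace = ρ.trace := by
  have := kraus_sum γ τ hγ hτ
  calc (ΦAD γ τ ρ).trace
      = ((E₀ γ τ)ᴴ * E₀ γ τ * ρ).trace + ((E₁ γ τ)ᴴ * E₁ γ τ * ρ).trace := by
        rw [ΦAD, Matrix.trace_add, Matrix.trace_mul_cycle (E₀ γ τ),
          Matrix.trace_mul_cycle (E₁ γ τ)]
    _ = (((E₀ γ τ)ᴴ * E₀ γ τ + (E₁ γ τ)ᴴ * E₁ γ τ) * ρ).trace := by
        rw [Matrix.add_mul, Matrix.trace_add]
    _ = ρ.trace := by rw [this, Matrix.one_mul]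

lemma uprop_unitary (Δt u : ℝ) : (Uprop Δt u)ᴴ * Uprop Δt u = 1 := by
  set X := ((-Complex.I * (Δt : ℂ)) • Hctrl u) with hX
  have hH : (Hctrl u)ᴴ = Hctrl u := by
    ext i j
    fin_cases i <;> fin_cases j <;>
      simp [Hctrl, σx, Matrix.conjTranspose_apply, div_eq_mul_inv]
  have hXh : Xᴴ = -X := by
    rw [hX, Matrix.conjTranspose_smul, hH]
    rw [← neg_smul]
    congr 1
    simp [Complex.ext_iff]
  have : (Uprop Δt u)ᴴ = NormedSpace.exp (-X) := by
    rw [Uprop, ← Matrix.exp_conjTranspose, hXh]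
  rw [this, Uprop, ← hX, ← Matrix.exp_add_of_commute (-X) X (Commute.neg_left rfl),
    neg_add_cancel, NormedSpace.exp_zero]

lemma phi_herm (γ τ : ℝ) {ρ : Matrix (Fin 2) (Fin 2) ℂ} (h : ρ.IsHermitian) :
    (ΦAD γ τ ρ).IsHermitian :=
  ((Matrix.isHermitian_mul_mul_conjTranspose _ h).add
    (Matrix.isHermitian_mul_mul_conjTranspose _ h))

lemma phi_psd (γ τ : ℝ) {ρ : Matrix (Fin 2) (Fin 2) ℂ} (h : ρ.PosSemidef) :
    (ΦAD γ τ ρ).PosSemidef :=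
  (h.mul_mul_conjTranspose_same _).add (h.mul_mul_conjTranspose_same _)

/-- The Strang-split Lindblad integrator is trace-preserving, Hermiticity-preserving and
positivity-preserving step by step. -/
theorem strang_step_CPTP (γ Δt : ℝ) (hγ : 0 < γ) (hΔt : 0 < Δt) (u : ℝ)
    (ρ : Matrix (Fin 2) (Fin 2) ℂ) :
    (Fstrang γ Δt ρ u).trace = ρ.trace ∧
      (ρ.IsHermitian → (Fstrang γ Δt ρ u).IsHermitian) ∧
      (ρ.PosSemidef → (Fstrang γ Δt ρ u).PosSemidef) := by
  have hγ' := hγ.le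
  have hτ : (0:ℝ) ≤ Δt / 2 := by linarith
  refine ⟨?_, fun h => ?_, fun h => ?_⟩
  · rw [Fstrang, phi_trace γ _ hγ' hτ, Matrix.trace_mul_cycle,
      uprop_unitary, Matrix.one_mul, phi_trace γ _ hγ' hτ]
  · exact phi_herm _ _ (Matrix.isHermitian_mul_mul_conjTranspose _ (phi_herm _ _ h))
  · exact phi_psd _ _ ((phi_psd _ _ h).mul_mul_conjTranspose_same _)
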